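/- For all b ∈ ℝ: V^{sk}(b) ≥ V^{fw}(b), where V^{sk}(b) = rT + (θσT + σb)·𝟙{b > −θT} and V^{fw}(b) = rT + (1/2)(θ + b/T)²T·𝟙{−θT < b ≤ −θT + σT} + (θσT + σb − (1/2)σ²T)·𝟙{b > −θT + σT}. Moreover the inequality is strict whenever b > −θT. -/

import Mathlib

/-- V^{sk}(b) ≥ V^{fw}(b) for all b, with strict inequality whenever
b > −θT. -/
theorem skorokhod_dominates_forward
    (μ r σ T θ : ℝ) (hσ : 0 < σ) (hT : 0 < T) (hθ : θ = (μ - r) / σ)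
    (Vsk Vfw : ℝ → ℝ)
    (hsk : ∀ b : ℝ, Vsk b = r * T + (θ * σ * T + σ * b) * (if b > -θ * T then 1 else 0))
    (hfw : ∀ b : ℝ, Vfw b = r * T
      + ((1/2) * (θ + b / T)^2 * T) * (if -θ * T < b ∧ b ≤ -θ * T + σ * T then 1 else 0)
      + (θ * σ * T + σ * b - (1/2) * σ^2 * T) * (if b > -θ * T + σ * T then 1 else 0)) :
    (∀ b : ℝ, Vfw b ≤ Vsk b) ∧ (∀ b : ℝ, b > -θ * T → Vfw b < Vsk b) := by
  have hσT : 0 < σ * T := mul_pos hσ hT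
  have hstrict : ∀ b : ℝ, b > -θ * T → Vfw b < Vsk b := by
    intro b hb
    rw [hsk, hfw]
    split_ifs with h1 h2 h3 h3
    · exact absurd h1.2 (by linarith)
    · -- middle region
      have hu : 0 < θ * T + b := by linarith
      have hu2 : θ * T + b ≤ σ * T := by linarith [h1.2]
      have key : (1/2) * (θ + b / T)^2 * T < θ * σ * T + σ * b := by
        have e : (1/2) * (θ + b / T)^2 * T = (θ * T + b)^2 / (2 * T) := by
          field_simp
        rw [e, div_lt_iff₀ (by positivity)]
        nlinarith
      linarith
    · nlinarith
    · push_neg at h1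
      exact absurd (h1 hb) (by linarith)
  refine ⟨fun b => ?_, hstrict⟩
  by_cases hb : b > -θ * T
  · exact (hstrict b hb).le
  · push_neg at hb
    rw [hsk, hfw]
    split_ifs with h1 h2 h3 h3 <;> first
      | linarith [h1.1] | linarith
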